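/- arXiv:2210.06406 — 4 statements merged into one kernel-verified Lean document; each statement's English description precedes it below -/
import Mathlib

section
/- Let n ≥ 1 and let R be an n × n real upper triangular matrix (R i j = 0 whenever i > j) such that the linear map of Euclidean ℝⁿ induced by R has operator norm at most 1 and |det R| = 1. Then R is a diagonal matrix and every diagonal entry of R equals 1 or −1. -/
/-- An `n × n` real upper triangular matrix (`n ≥ 1`) inducing a linear map of
Euclidean `ℝⁿ` of operator norm at most `1` and with `|det R| = 1` is diagonal with all diagonal
entries equal to `1` or `-1`. -/
theorem stmt_1 (n : ℕ) (hn : 1 ≤ n) (R : Matrix (Fin n) (Fin n) ℝ)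
    (htri : ∀ i j : Fin n, j < i → R i j = 0)
    (hnorm : ‖LinearMap.toContinuousLinearMap (Matrix.toEuclideanLin R)‖ ≤ 1)
    (hdet : |R.det| = 1) :
    (∀ i j : Fin n, i ≠ j → R i j = 0) ∧ (∀ i : Fin n, R i i = 1 ∨ R i i = -1) := by
  -- column norms ≤ 1
  have hcol : ∀ j : Fin n, ∑ i, (R i j)^2 ≤ 1 := by
    intro j
    set f := LinearMap.toContinuousLinearMap (Matrix.toEuclideanLin R) with hf
    have hx : ‖EuclideanSpace.single j (1:ℝ)‖ = 1 := by
      rw [EuclideanSpace.norm_single]; norm_num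
    have h := f.le_opNorm (EuclideanSpace.single j 1)
    rw [hx, mul_one] at h
    have h1 : ‖f (EuclideanSpace.single j 1)‖ ≤ 1 := h.trans hnorm
    have h2 : ‖f (EuclideanSpace.single j 1)‖^2 ≤ 1 := by
      nlinarith [norm_nonneg (f (EuclideanSpace.single j 1))]
    rw [EuclideanSpace.norm_eq, Real.sq_sqrt (by positivity)] at h2
    convert h2 using 2 with i
    rw [Real.norm_eq_abs, sq_abs]
    congr 1
    simp [hf, Matrix.toEuclideanLin_apply]
  have hdiag_le : ∀ i : Fin n, (R i i)^2 ≤ 1 := fun i => by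
    have := hcol i
    have h := Finset.single_le_sum (f := fun k => (R k i)^2) (fun k _ => sq_nonneg _)
      (Finset.mem_univ i)
    linarith
  -- det = product of diagonal
  have hdet' : |∏ i, R i i| = 1 := by
    rwa [Matrix.det_of_upperTriangular (by intro i j h; exact htri i j h)] at hdet
  have hprod : ∏ i, |R i i| = 1 := by rwa [← Finset.abs_prod]
  -- each |R i i| = 1
  have habs : ∀ i : Fin n, |R i i| = 1 := by
    intro i
    by_contra hne
    have hlt : |R i i| < 1 := lt_of_le_of_ne (by nlinarith [hdiag_le i, abs_nonneg (R i i), sq_abs (R i i)]) hne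
    have hrest : ∏ k ∈ Finset.univ.erase i, |R k k| ≤ 1 :=
      Finset.prod_le_one (fun k _ => abs_nonneg _)
        (fun k _ => by nlinarith [hdiag_le k, sq_abs (R k k), abs_nonneg (R k k)])
    have hsplit : |R i i| * ∏ k ∈ Finset.univ.erase i, |R k k| = ∏ k, |R k k| :=
      Finset.mul_prod_erase Finset.univ (fun k => |R k k|) (Finset.mem_univ i)
    have hrnn : 0 ≤ ∏ k ∈ Finset.univ.erase i, |R k k| :=
      Finset.prod_nonneg (fun k _ => abs_nonneg _)
    nlinarith [abs_nonneg (R i i)]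
  constructor
  · intro i j hij
    rcases lt_or_gt_of_ne hij with h | h
    · -- i < j : above diagonal, use column j
      by_contra h0
      have h1 : (R j j)^2 = 1 := by
        have := habs j; nlinarith [sq_abs (R j j)]
      have h2 := hcol j
      have h3 : (R i j)^2 + (R j j)^2 ≤ ∑ k, (R k j)^2 := by
        have := Finset.sum_le_sum_of_subset_of_nonneg
          (s := ({i, j} : Finset (Fin n))) (t := Finset.univ)
          (by simp) (fun k _ _ => sq_nonneg (R k j))
        rwa [Finset.sum_pair hij] at this
      nlinarith [pow_pos (abs_pos.mpr h0) 2, sq_abs (R i j)]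
    · exact htri i j h
  · intro i
    have := habs i
    rcases abs_eq (by norm_num : (0:ℝ) ≤ 1) |>.mp (by linarith [habs i] : |R i i| = 1) with h | h
    · exact Or.inl h
    · exact Or.inr h
end

section
/- Let n ≥ 1, let E ⊆ ℝⁿ be a nonempty open connected set, and let ψ : E → ℝⁿ be a C¹ map such that ‖Dψ(x)‖ ≤ 1 (operator norm) for all x ∈ E and |det Dψ(x)| = 1 for Lebesgue-almost every x ∈ E. Then ψ coincides on E with the restriction of an affine isometry of ℝⁿ: there exist a linear isometry A of ℝⁿ and a vector b ∈ ℝⁿ such that ψ(x) = A x + b for all x ∈ E. In particular ‖ψ(x) − ψ(y)‖ = ‖x − y‖ for all x, y ∈ E. -/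
open MeasureTheory RealInnerProductSpace Metric


lemma aux_norm_map_eq (n : ℕ) (A : EuclideanSpace ℝ (Fin n) →L[ℝ] EuclideanSpace ℝ (Fin n))
    (hA : ‖A‖ ≤ 1) (hd : |A.det| = 1) (v : EuclideanSpace ℝ (Fin n)) : ‖A v‖ = ‖v‖ := by
  set T : EuclideanSpace ℝ (Fin n) →ₗ[ℝ] EuclideanSpace ℝ (Fin n) :=
    LinearMap.adjoint (A : EuclideanSpace ℝ (Fin n) →ₗ[ℝ] EuclideanSpace ℝ (Fin n)) ∘ₗ
      (A : EuclideanSpace ℝ (Fin n) →ₗ[ℝ] EuclideanSpace ℝ (Fin n)) with hT_def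
  have hTsym : T.IsSymmetric := by
    intro x y
    simp only [hT_def, LinearMap.comp_apply, LinearMap.adjoint_inner_left,
      LinearMap.adjoint_inner_right]
  have hfr : Module.finrank ℝ (EuclideanSpace ℝ (Fin n)) = n := finrank_euclideanSpace_fin
  set b := hTsym.eigenvectorBasis hfr with hb
  set μ := hTsym.eigenvalues hfr with hμ
  have happly : ∀ i, T (b i) = μ i • b i := by
    intro i
    have := hTsym.apply_eigenvectorBasis hfr i
    exact_mod_cast this
  have hTv : ∀ x : EuclideanSpace ℝ (Fin n), ⟪T x, x⟫ = ‖A x‖ ^ 2 := by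
    intro x
    rw [hT_def, LinearMap.comp_apply, LinearMap.adjoint_inner_left]
    simpa using real_inner_self_eq_norm_sq (A x)
  have hble : ∀ x : EuclideanSpace ℝ (Fin n), ‖A x‖ ≤ ‖x‖ := fun x => by
    calc ‖A x‖ ≤ ‖A‖ * ‖x‖ := A.le_opNorm x
    _ ≤ 1 * ‖x‖ := by gcongr
    _ = ‖x‖ := one_mul _
  have hbnorm : ∀ i, ‖b i‖ = 1 := fun i => b.orthonormal.1 i
  have hμ_eq : ∀ i, μ i = ‖A (b i)‖ ^ 2 := by
    intro i
    have h1 := hTv (b i)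
    rw [happly i, real_inner_smul_left, real_inner_self_eq_norm_sq, hbnorm i] at h1
    simpa using h1
  have hμ01 : ∀ i, 0 ≤ μ i ∧ μ i ≤ 1 := by
    intro i
    rw [hμ_eq i]
    refine ⟨by positivity, ?_⟩
    calc ‖A (b i)‖ ^ 2 ≤ ‖b i‖ ^ 2 := by gcongr; exact hble _
    _ = 1 := by rw [hbnorm i]; norm_num
  have hmat : LinearMap.toMatrix b.toBasis b.toBasis T = Matrix.diagonal μ := by
    ext i j
    have hrepr : b.toBasis.repr (b j) = Finsupp.single j 1 := by
      rw [← OrthonormalBasis.coe_toBasis, Module.Basis.repr_self]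
    rw [LinearMap.toMatrix_apply, OrthonormalBasis.coe_toBasis, happly j]
    rcases eq_or_ne i j with h | h
    · subst h; simp [hrepr, Matrix.diagonal]
    · simp [hrepr, Matrix.diagonal, h, Ne.symm h, Finsupp.single_apply]
  have hdetT : LinearMap.det T = ∏ i, μ i := by
    rw [← LinearMap.det_toMatrix b.toBasis, hmat, Matrix.det_diagonal]
  have hdetT' : LinearMap.det T = 1 := by
    have h1 : LinearMap.det T = LinearMap.det (LinearMap.adjoint (A : EuclideanSpace ℝ (Fin n) →ₗ[ℝ] EuclideanSpace ℝ (Fin n))) * LinearMap.det (A : EuclideanSpace ℝ (Fin n) →ₗ[ℝ] EuclideanSpace ℝ (Fin n)) := by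
      rw [hT_def, LinearMap.det_comp]
    have h2 : LinearMap.det (LinearMap.adjoint (A : EuclideanSpace ℝ (Fin n) →ₗ[ℝ] EuclideanSpace ℝ (Fin n))) = LinearMap.det (A : EuclideanSpace ℝ (Fin n) →ₗ[ℝ] EuclideanSpace ℝ (Fin n)) := by
      rw [← LinearMap.det_toMatrix b.toBasis, LinearMap.toMatrix_adjoint b b,
        Matrix.det_conjTranspose, ← LinearMap.det_toMatrix b.toBasis
          (A : EuclideanSpace ℝ (Fin n) →ₗ[ℝ] EuclideanSpace ℝ (Fin n))]
      rfl
    have h3 : A.det = LinearMap.det (A : EuclideanSpace ℝ (Fin n) →ₗ[ℝ] EuclideanSpace ℝ (Fin n)) := rfl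
    rw [h1, h2, ← h3, ← sq, ← sq_abs, hd]; norm_num
  have hμ1 : ∀ i, μ i = 1 := by
    intro i
    have hprod : ∏ j, μ j = 1 := by rw [← hdetT, hdetT']
    have hsplit : ∏ j, μ j = μ i * ∏ j ∈ Finset.univ.erase i, μ j :=
      (Finset.mul_prod_erase Finset.univ μ (Finset.mem_univ i)).symm
    have hrest : ∏ j ∈ Finset.univ.erase i, μ j ≤ 1 :=
      Finset.prod_le_one (fun j _ => (hμ01 j).1) (fun j _ => (hμ01 j).2)
    have hrest0 : 0 ≤ ∏ j ∈ Finset.univ.erase i, μ j :=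
      Finset.prod_nonneg (fun j _ => (hμ01 j).1)
    have h1le : 1 ≤ μ i := by
      by_contra h
      push_neg at h
      have hlt : μ i * ∏ j ∈ Finset.univ.erase i, μ j < 1 := by
        calc μ i * ∏ j ∈ Finset.univ.erase i, μ j ≤ μ i * 1 :=
              mul_le_mul_of_nonneg_left hrest (hμ01 i).1
        _ < 1 := by linarith
      rw [← hsplit, hprod] at hlt; linarith
    linarith [(hμ01 i).2]
  have hTid : ∀ x, T x = x := by
    have hT : T = LinearMap.id := by
      apply b.toBasis.ext
      intro i
      rw [OrthonormalBasis.coe_toBasis, happly i, hμ1 i, one_smul, LinearMap.id_apply]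
    intro x; rw [hT]; rfl
  have hsq : ‖A v‖ ^ 2 = ‖v‖ ^ 2 := by
    rw [← hTv v, hTid v, real_inner_self_eq_norm_sq]
  rw [← Real.sqrt_sq (norm_nonneg (A v)), hsq, Real.sqrt_sq (norm_nonneg v)]


lemma aux_loc_const {V α : Type*} [PseudoMetricSpace V] {E : Set V}
    (hE : IsPreconnected E) {f : V → α}
    (h : ∀ a ∈ E, ∃ ρ > 0, Metric.ball a ρ ⊆ E ∧ ∀ x ∈ Metric.ball a ρ, f x = f a)
    {x₀ : V} (hx₀ : x₀ ∈ E) : ∀ x ∈ E, f x = f x₀ := by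
  set u := {x | x ∈ E ∧ f x = f x₀} with hu_def
  set v := {x | x ∈ E ∧ f x ≠ f x₀} with hv_def
  have hopen : ∀ (p : α → Prop), IsOpen {x | x ∈ E ∧ p (f x)} := by
    intro p
    rw [Metric.isOpen_iff]
    rintro x ⟨hxE, hpx⟩
    obtain ⟨ρ, hρ, hballE, hconst⟩ := h x hxE
    exact ⟨ρ, hρ, fun z hz => ⟨hballE hz, by rw [hconst z hz]; exact hpx⟩⟩
  have hu : IsOpen u := hopen (fun t => t = f x₀)
  have hv : IsOpen v := hopen (fun t => t ≠ f x₀)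
  have hdisj : Disjoint u v := by
    rw [Set.disjoint_left]
    rintro x ⟨_, hx1⟩ ⟨_, hx2⟩
    exact hx2 hx1
  have hsub : E ⊆ u ∪ v := by
    intro x hx
    by_cases hfx : f x = f x₀
    · exact Or.inl ⟨hx, hfx⟩
    · exact Or.inr ⟨hx, hfx⟩
  have hne : (E ∩ u).Nonempty := ⟨x₀, hx₀, hx₀, rfl⟩
  have := hE.subset_left_of_subset_union hu hv hdisj hsub hne
  exact fun x hx => (this hx).2



lemma aux_local (n : ℕ) (E : Set (EuclideanSpace ℝ (Fin n))) (hE_open : IsOpen E)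
    (ψ : EuclideanSpace ℝ (Fin n) → EuclideanSpace ℝ (Fin n))
    (hψ : ContDiffOn ℝ 1 ψ E)
    (hiso : ∀ x ∈ E, ∀ v, ‖fderiv ℝ ψ x v‖ = ‖v‖)
    {a : EuclideanSpace ℝ (Fin n)} (ha : a ∈ E) :
    ∃ ρ > 0, Metric.ball a ρ ⊆ E ∧ ∀ x ∈ Metric.ball a ρ,
      fderiv ℝ ψ x = fderiv ℝ ψ a ∧ ψ x = fderiv ℝ ψ a (x - a) + ψ a := by
  have hdiff : ∀ x ∈ E, HasFDerivAt ψ (fderiv ℝ ψ x) x := fun x hx =>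
    (((hψ.differentiableOn one_ne_zero) x hx).differentiableAt (hE_open.mem_nhds hx)).hasFDerivAt
  -- the derivative at `a` as a continuous linear equiv
  set A := fderiv ℝ ψ a with hA_def
  have hAiso : ∀ v, ‖A v‖ = ‖v‖ := hiso a ha
  let Ali : EuclideanSpace ℝ (Fin n) →ₗᵢ[ℝ] EuclideanSpace ℝ (Fin n) :=
    ⟨(A : EuclideanSpace ℝ (Fin n) →ₗ[ℝ] EuclideanSpace ℝ (Fin n)), hAiso⟩
  let Ae := Ali.toLinearIsometryEquiv rfl
  let Aeq : EuclideanSpace ℝ (Fin n) ≃L[ℝ] EuclideanSpace ℝ (Fin n) :=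
    Ae.toContinuousLinearEquiv
  have hAeq : (Aeq : EuclideanSpace ℝ (Fin n) →L[ℝ] EuclideanSpace ℝ (Fin n)) = A := by
    ext v; rfl
  have hcda : ContDiffAt ℝ 1 ψ a := hψ.contDiffAt (hE_open.mem_nhds ha)
  have hfd : HasFDerivAt ψ (Aeq : EuclideanSpace ℝ (Fin n) →L[ℝ] EuclideanSpace ℝ (Fin n)) a := by
    rw [hAeq]; exact hdiff a ha
  have hS : HasStrictFDerivAt ψ (Aeq : EuclideanSpace ℝ (Fin n) →L[ℝ] EuclideanSpace ℝ (Fin n)) a :=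
    hcda.hasStrictFDerivAt' hfd one_ne_zero
  set g := hS.localInverse ψ Aeq a with hg_def
  have hgcd : ContDiffAt ℝ 1 g (ψ a) := hcda.to_localInverse hfd one_ne_zero
  have hgb : g (ψ a) = a := hS.localInverse_apply_image
  have hgc : ContinuousAt g (ψ a) := hgcd.continuousAt
  -- a ball around ψ a on which g is differentiable with isometric derivative
  obtain ⟨u, hu_nhds, hgu⟩ := hgcd.contDiffOn le_rfl (by simp)
  obtain ⟨t, htu, ht_open, htb⟩ := _root_.mem_nhds_iff.mp hu_nhds
  have hgE : ∀ᶠ y in nhds (ψ a), g y ∈ E :=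
    hgc.eventually_mem (hE_open.mem_nhds (by rw [hgb]; exact ha))
  have hmem : (t ∩ {y | ψ (g y) = y ∧ g y ∈ E}) ∈ nhds (ψ a) :=
    Filter.inter_mem (ht_open.mem_nhds htb) (hS.eventually_right_inverse.and hgE)
  obtain ⟨r₂, hr₂pos, hball₂⟩ := Metric.mem_nhds_iff.mp hmem
  have hgdiff : ∀ y ∈ ball (ψ a) r₂, HasFDerivAt g (fderiv ℝ g y) y := by
    intro y hy
    have hyt : y ∈ t := (hball₂ hy).1
    exact ((((hgu.mono htu).differentiableOn one_ne_zero) y hyt).differentiableAt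
      (ht_open.mem_nhds hyt)).hasFDerivAt
  have hgiso : ∀ y ∈ ball (ψ a) r₂, ∀ w, ‖fderiv ℝ g y w‖ = ‖w‖ := by
    intro y hy w
    have hyE : g y ∈ E := (hball₂ hy).2.2
    have hcomp : HasFDerivAt (ψ ∘ g) ((fderiv ℝ ψ (g y)).comp (fderiv ℝ g y)) y :=
      (hdiff (g y) hyE).comp y (hgdiff y hy)
    have hev : (id : EuclideanSpace ℝ (Fin n) → EuclideanSpace ℝ (Fin n)) =ᶠ[nhds y] ψ ∘ g := by
      filter_upwards [isOpen_ball.mem_nhds hy] with z hz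
      exact ((hball₂ hz).2.1).symm
    have hid : HasFDerivAt (id : EuclideanSpace ℝ (Fin n) → EuclideanSpace ℝ (Fin n))
        ((fderiv ℝ ψ (g y)).comp (fderiv ℝ g y)) y := hcomp.congr_of_eventuallyEq hev
    have huniq : (fderiv ℝ ψ (g y)).comp (fderiv ℝ g y) = ContinuousLinearMap.id ℝ _ :=
      hid.unique (hasFDerivAt_id y)
    have h1 : fderiv ℝ ψ (g y) (fderiv ℝ g y w) = w := by
      have := congrArg (fun L => L w) huniq
      simpa using this
    calc ‖fderiv ℝ g y w‖ = ‖fderiv ℝ ψ (g y) (fderiv ℝ g y w)‖ := (hiso (g y) hyE _).symm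
    _ = ‖w‖ := by rw [h1]
  -- g is 1-Lipschitz on ball (ψ a) r₂
  have hglip : ∀ y ∈ ball (ψ a) r₂, ∀ z ∈ ball (ψ a) r₂, ‖g z - g y‖ ≤ ‖z - y‖ := by
    intro y hy z hz
    have := Convex.norm_image_sub_le_of_norm_hasFDerivWithin_le
      (f := g) (f' := fun y => fderiv ℝ g y) (s := ball (ψ a) r₂) (C := 1)
      (fun w hw => (hgdiff w hw).hasFDerivWithinAt)
      (fun w hw => by
        apply ContinuousLinearMap.opNorm_le_bound _ zero_le_one
        intro v; rw [hgiso w hw v, one_mul])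
      (convex_ball _ _) hy hz
    simpa using this
  -- ψ is 1-Lipschitz on a ball around a inside E
  obtain ⟨r₁, hr₁pos, hball₁⟩ := Metric.isOpen_iff.mp hE_open a ha
  have hψlip : ∀ y ∈ ball a r₁, ∀ z ∈ ball a r₁, ‖ψ z - ψ y‖ ≤ ‖z - y‖ := by
    intro y hy z hz
    have := Convex.norm_image_sub_le_of_norm_hasFDerivWithin_le
      (f := ψ) (f' := fun y => fderiv ℝ ψ y) (s := ball a r₁) (C := 1)
      (fun w hw => (hdiff w (hball₁ hw)).hasFDerivWithinAt)
      (fun w hw => by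
        apply ContinuousLinearMap.opNorm_le_bound _ zero_le_one
        intro v; rw [hiso w (hball₁ hw) v, one_mul])
      (convex_ball _ _) hy hz
    simpa using this
  -- choose ρ
  have hψcont : ContinuousAt ψ a := (hdiff a ha).differentiableAt.continuousAt
  have hmem2 : (ball a r₁ ∩ {x | ψ x ∈ ball (ψ a) r₂} ∩ {x | g (ψ x) = x}) ∈ nhds a := by
    refine Filter.inter_mem (Filter.inter_mem (isOpen_ball.mem_nhds (mem_ball_self hr₁pos)) ?_)
      hS.eventually_left_inverse
    exact hψcont.eventually_mem (isOpen_ball.mem_nhds (mem_ball_self hr₂pos))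
  obtain ⟨ρ, hρpos, hballρ⟩ := Metric.mem_nhds_iff.mp hmem2
  have hρ₁ : ball a ρ ⊆ ball a r₁ := fun z hz => (hballρ hz).1.1
  have hρE : ball a ρ ⊆ E := fun z hz => hball₁ (hρ₁ hz)
  have hρ₂ : ∀ z ∈ ball a ρ, ψ z ∈ ball (ψ a) r₂ := fun z hz => (hballρ hz).1.2
  have hρg : ∀ z ∈ ball a ρ, g (ψ z) = z := fun z hz => (hballρ hz).2
  -- ψ preserves distances on ball a ρ
  have hdist : ∀ x ∈ ball a ρ, ∀ y ∈ ball a ρ, ‖ψ x - ψ y‖ = ‖x - y‖ := by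
    intro x hx y hy
    have hle : ‖ψ x - ψ y‖ ≤ ‖x - y‖ := hψlip y (hρ₁ hy) x (hρ₁ hx)
    have hge : ‖x - y‖ ≤ ‖ψ x - ψ y‖ := by
      have := hglip (ψ y) (hρ₂ y hy) (ψ x) (hρ₂ x hx)
      rwa [hρg x hx, hρg y hy] at this
    linarith
  -- key identity
  have key : ∀ x ∈ ball a ρ, ∀ y ∈ ball a ρ, ψ x - ψ y = fderiv ℝ ψ x (x - y) := by
    intro x hx y hy
    have hxE : x ∈ E := hρE hx
    set D := fderiv ℝ ψ x with hD_def
    have hinner : ∀ v, ⟪ψ x - ψ y, D v⟫ = ⟪x - y, v⟫ := by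
      intro v
      have hf1 : HasFDerivAt (fun z => ψ z - ψ y) D x := (hdiff x hxE).sub_const (ψ y)
      have hf2 : HasFDerivAt (fun z : EuclideanSpace ℝ (Fin n) => z - y)
        (ContinuousLinearMap.id ℝ _) x := (hasFDerivAt_id x).sub_const y
      have hF1 := hf1.inner ℝ hf1
      have hF2 := hf2.inner ℝ hf2
      have hF := hF1.sub hF2
      have hzero : (fun _ : EuclideanSpace ℝ (Fin n) => (0:ℝ)) =ᶠ[nhds x]
          (fun z => ⟪ψ z - ψ y, ψ z - ψ y⟫ - ⟪z - y, z - y⟫) := by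
        filter_upwards [isOpen_ball.mem_nhds hx] with z hz
        rw [real_inner_self_eq_norm_sq, real_inner_self_eq_norm_sq, hdist z hz y hy, sub_self]
      have h0 : HasFDerivAt (fun z => ⟪ψ z - ψ y, ψ z - ψ y⟫ - ⟪z - y, z - y⟫)
          (0 : EuclideanSpace ℝ (Fin n) →L[ℝ] ℝ) x :=
        (hasFDerivAt_const (0:ℝ) x).congr_of_eventuallyEq hzero.symm
      have hDeq := hF.unique h0
      have := congrArg (fun L => L v) hDeq
      simp only [ContinuousLinearMap.sub_apply, ContinuousLinearMap.comp_apply,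
        ContinuousLinearMap.prod_apply, fderivInnerCLM_apply, ContinuousLinearMap.zero_apply,
        ContinuousLinearMap.coe_id', id_eq] at this
      have hsym1 : ⟪D v, ψ x - ψ y⟫ = ⟪ψ x - ψ y, D v⟫ := real_inner_comm _ _
      have hsym2 : ⟪v, x - y⟫ = ⟪x - y, v⟫ := real_inner_comm _ _
      rw [hsym1, hsym2] at this
      linarith
    have hDiso : ∀ v, ‖D v‖ = ‖v‖ := hiso x hxE
    let Dli : EuclideanSpace ℝ (Fin n) →ₗᵢ[ℝ] EuclideanSpace ℝ (Fin n) :=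
      ⟨(D : EuclideanSpace ℝ (Fin n) →ₗ[ℝ] EuclideanSpace ℝ (Fin n)), hDiso⟩
    have hinj : Function.Injective D := fun p q hpq => by
      have h1 : ‖D (p - q)‖ = ‖p - q‖ := hDiso _
      rw [map_sub, hpq, sub_self, norm_zero] at h1
      exact sub_eq_zero.mp (norm_eq_zero.mp h1.symm)
    have hsurj : Function.Surjective D :=
      LinearMap.surjective_of_injective (f := (D : EuclideanSpace ℝ (Fin n) →ₗ[ℝ] EuclideanSpace ℝ (Fin n))) hinj
    have horto : ∀ w, ⟪ψ x - ψ y - D (x - y), w⟫ = 0 := by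
      intro w
      obtain ⟨v, rfl⟩ := hsurj w
      have h2 : ⟪D (x - y), D v⟫ = ⟪x - y, v⟫ := Dli.inner_map_map (x - y) v
      rw [inner_sub_left, hinner v, h2, sub_self]
    have := horto (ψ x - ψ y - D (x - y))
    rw [inner_self_eq_zero] at this
    exact sub_eq_zero.mp this
  -- conclude
  have hpsix : ∀ x ∈ ball a ρ, ψ x = fderiv ℝ ψ a (x - a) + ψ a := by
    intro x hx
    have h := key a (mem_ball_self hρpos) x hx
    have h2 : fderiv ℝ ψ a (x - a) = ψ x - ψ a := by
      have h3 : x - a = -(a - x) := by abel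
      rw [h3, map_neg, ← h]
      abel
    rw [h2]; abel
  refine ⟨ρ, hρpos, hρE, fun x hx => ⟨?_, hpsix x hx⟩⟩
  have haff : HasFDerivAt (fun z => fderiv ℝ ψ a (z - a) + ψ a) (fderiv ℝ ψ a) x := by
    have h1 : HasFDerivAt (fun z : EuclideanSpace ℝ (Fin n) => fderiv ℝ ψ a (z - a))
        ((fderiv ℝ ψ a).comp (ContinuousLinearMap.id ℝ _)) x :=
      ((fderiv ℝ ψ a).hasFDerivAt.comp x ((hasFDerivAt_id x).sub_const a))
    have h2 := h1.add_const (ψ a)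
    simpa using h2
  have hev : (fun z => fderiv ℝ ψ a (z - a) + ψ a) =ᶠ[nhds x] ψ := by
    filter_upwards [isOpen_ball.mem_nhds hx] with z hz
    exact (hpsix z hz).symm
  exact (hdiff x (hρE hx)).unique (haff.congr_of_eventuallyEq hev.symm)


/-- If `ψ` is `C¹` on a nonempty open connected set `E ⊆ ℝⁿ` (`n ≥ 1`), with
`‖Dψ(x)‖ ≤ 1` everywhere on `E` and `|det Dψ(x)| = 1` a.e. on `E`, then `ψ` coincides on `E` with
an affine isometry `x ↦ A x + b`; in particular `ψ` preserves distances on `E`. -/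
theorem stmt_3 (n : ℕ) (hn : 1 ≤ n) (E : Set (EuclideanSpace ℝ (Fin n)))
    (hE_ne : E.Nonempty) (hE_open : IsOpen E) (hE_conn : IsConnected E)
    (ψ : EuclideanSpace ℝ (Fin n) → EuclideanSpace ℝ (Fin n))
    (hψ : ContDiffOn ℝ 1 ψ E)
    (hnorm : ∀ x ∈ E, ‖fderiv ℝ ψ x‖ ≤ 1)
    (hdet : ∀ᵐ x ∂(volume.restrict E), |(fderiv ℝ ψ x).det| = 1) :
    ∃ (A : EuclideanSpace ℝ (Fin n) →ₗᵢ[ℝ] EuclideanSpace ℝ (Fin n))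
      (b : EuclideanSpace ℝ (Fin n)),
      (∀ x ∈ E, ψ x = A x + b) ∧ ∀ x ∈ E, ∀ y ∈ E, ‖ψ x - ψ y‖ = ‖x - y‖ := by
  have hdet' : ∀ x ∈ E, |(fderiv ℝ ψ x).det| = 1 := by
    intro x hx
    by_contra hne
    have hcont : ContinuousOn (fun y => fderiv ℝ ψ y) E :=
      hψ.continuousOn_fderiv_of_isOpen hE_open le_rfl
    have hcd : ContinuousOn (fun y => (fderiv ℝ ψ y).det) E :=
      ContinuousLinearMap.continuous_det.comp_continuousOn hcont
    have hOpenT : IsOpen {t : ℝ | |t| ≠ 1} := by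
      have : IsClosed ((fun t : ℝ => |t|) ⁻¹' {1}) :=
        IsClosed.preimage continuous_abs isClosed_singleton
      simpa [Set.preimage, Set.compl_setOf] using this.isOpen_compl
    have hW : IsOpen (E ∩ (fun y => (fderiv ℝ ψ y).det) ⁻¹' {t : ℝ | |t| ≠ 1}) :=
      hcd.isOpen_inter_preimage hE_open hOpenT
    have hpos : 0 < volume (E ∩ (fun y => (fderiv ℝ ψ y).det) ⁻¹' {t : ℝ | |t| ≠ 1}) :=
      hW.measure_pos volume ⟨x, hx, hne⟩
    have hae : ∀ᵐ y ∂(volume : Measure (EuclideanSpace ℝ (Fin n))),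
        y ∈ E → |(fderiv ℝ ψ y).det| = 1 := (ae_restrict_iff' hE_open.measurableSet).mp hdet
    have h0 : volume {y : EuclideanSpace ℝ (Fin n) | ¬ (y ∈ E → |(fderiv ℝ ψ y).det| = 1)} = 0 :=
      ae_iff.mp hae
    have hsub : (E ∩ (fun y => (fderiv ℝ ψ y).det) ⁻¹' {t : ℝ | |t| ≠ 1}) ⊆
        {y : EuclideanSpace ℝ (Fin n) | ¬ (y ∈ E → |(fderiv ℝ ψ y).det| = 1)} := by
      rintro y ⟨hyE, hyd⟩ hcontra
      exact hyd (hcontra hyE)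
    exact absurd (measure_mono_null hsub h0) hpos.ne'
  have hiso : ∀ x ∈ E, ∀ v, ‖fderiv ℝ ψ x v‖ = ‖v‖ := fun x hx =>
    aux_norm_map_eq n _ (hnorm x hx) (hdet' x hx)
  obtain ⟨x₀, hx₀⟩ := hE_ne
  set Φ : EuclideanSpace ℝ (Fin n) →
      (EuclideanSpace ℝ (Fin n) →L[ℝ] EuclideanSpace ℝ (Fin n)) × EuclideanSpace ℝ (Fin n) :=
    fun x => (fderiv ℝ ψ x, ψ x - fderiv ℝ ψ x x) with hΦ_def
  have hΦloc : ∀ a ∈ E, ∃ ρ > 0, Metric.ball a ρ ⊆ E ∧ ∀ x ∈ Metric.ball a ρ, Φ x = Φ a := by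
    intro a ha
    obtain ⟨ρ, hρ, hballE, hprop⟩ := aux_local n E hE_open ψ hψ hiso ha
    refine ⟨ρ, hρ, hballE, fun x hx => ?_⟩
    obtain ⟨h1, h2⟩ := hprop x hx
    simp only [hΦ_def, Prod.mk.injEq]
    refine ⟨h1, ?_⟩
    rw [h1, h2, map_sub]
    abel
  have hconst := aux_loc_const hE_conn.isPreconnected hΦloc hx₀
  set A0 := fderiv ℝ ψ x₀ with hA0_def
  have hA0 : ∀ x ∈ E, fderiv ℝ ψ x = A0 := fun x hx => congrArg Prod.fst (hconst x hx)
  have hb : ∀ x ∈ E, ψ x = A0 x + (ψ x₀ - A0 x₀) := by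
    intro x hx
    have h1 := congrArg Prod.snd (hconst x hx)
    simp only [hΦ_def] at h1
    rw [hA0 x hx] at h1
    have : ψ x - A0 x = ψ x₀ - A0 x₀ := h1
    rw [← this]
    abel
  refine ⟨⟨(A0 : EuclideanSpace ℝ (Fin n) →ₗ[ℝ] EuclideanSpace ℝ (Fin n)), hiso x₀ hx₀⟩,
    ψ x₀ - A0 x₀, fun x hx => hb x hx, ?_⟩
  intro x hx y hy
  rw [hb x hx, hb y hy]
  have h2 : A0 x + (ψ x₀ - A0 x₀) - (A0 y + (ψ x₀ - A0 x₀)) = A0 (x - y) := by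
    rw [map_sub]; abel
  rw [h2, hiso x₀ hx₀]
end

section
/- Let n ≥ 1, let A₁, A₂ ⊆ ℝⁿ be Lebesgue measurable sets, let a₁ be a Lebesgue density point of A₁ and a₂ a Lebesgue density point of A₂ with a₁ ≠ a₂, and set v = (a₂ − a₁)/‖a₂ − a₁‖. Then, denoting by p_v the orthogonal projection of ℝⁿ onto the hyperplane v⊥ = {x ∈ ℝⁿ : ⟨x, v⟩ = 0}, the set p_v(A₁) ∩ p_v(A₂) has positive (n−1)-dimensional Hausdorff outer measure: ℋ^{n−1}(p_v(A₁) ∩ p_v(A₂)) > 0. -/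
open MeasureTheory Filter Metric Set
open scoped ENNReal RealInnerProductSpace

noncomputable section

namespace Stmt5Aux

def tl {m : ℕ} (x : EuclideanSpace ℝ (Fin (m + 1))) : EuclideanSpace ℝ (Fin m) :=
  WithLp.toLp 2 (fun j : Fin m => x j.succ)

lemma dist_eq_tl {m : ℕ} (x y : EuclideanSpace ℝ (Fin (m + 1))) :
    dist x y = Real.sqrt (dist (x 0) (y 0) ^ 2 + dist (tl x) (tl y) ^ 2) := by
  rw [EuclideanSpace.dist_eq, Fin.sum_univ_succ]
  congr 1
  rw [EuclideanSpace.dist_eq (tl x) (tl y), Real.sq_sqrt (by positivity)]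
  rfl

def Φ (m : ℕ) : EuclideanSpace ℝ (Fin (m + 1)) ≃ᵐ ℝ × (Fin m → ℝ) :=
  (MeasurableEquiv.toLp 2 (Fin (m + 1) → ℝ)).symm.trans
    (MeasurableEquiv.piFinSuccAbove (fun _ => ℝ) 0)

lemma Φ_measurePreserving (m : ℕ) : MeasurePreserving (Φ m) volume volume :=
  (EuclideanSpace.volume_preserving_symm_measurableEquiv_toLp _).trans
    (volume_preserving_piFinSuccAbove (fun _ => ℝ) 0)

lemma Φ_symm_apply (m : ℕ) (s : ℝ) (y : Fin m → ℝ) :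
    (Φ m).symm (s, y) = (MeasurableEquiv.toLp 2 (Fin (m+1) → ℝ)).symm.symm (Fin.cons s y) := by
  have : (MeasurableEquiv.piFinSuccAbove (fun _ : Fin (m+1) => ℝ) 0).symm (s, y)
      = Fin.cons s y := by
    show (Fin.insertNthEquiv (fun _ : Fin (m+1) => ℝ) 0) (s, y) = Fin.cons s y
    simp [Fin.insertNthEquiv, Fin.insertNth_zero']
  rw [← this]
  rfl

lemma Φ_symm_apply_zero (m : ℕ) (s : ℝ) (y : Fin m → ℝ) :
    ((Φ m).symm (s, y)) 0 = s := by
  rw [Φ_symm_apply]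
  rfl

lemma Φ_symm_apply_tl (m : ℕ) (s : ℝ) (y : Fin m → ℝ) :
    tl ((Φ m).symm (s, y)) = (MeasurableEquiv.toLp 2 (Fin m → ℝ)).symm.symm y := by
  ext j
  rw [Φ_symm_apply]
  show (Fin.cons s y : Fin (m+1) → ℝ) j.succ = y j
  simp

lemma density_eventually {k : ℕ} {B : Set (EuclideanSpace ℝ (Fin k))}
    (hB : MeasurableSet B) (b : EuclideanSpace ℝ (Fin k))
    (hd : Tendsto (fun r : ℝ =>
        volume (B ∩ Metric.closedBall b r) / volume (Metric.closedBall b r))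
      (nhdsWithin 0 (Set.Ioi 0)) (nhds 1))
    {η : ℝ} (hη : 0 < η) (hη1 : η ≤ 1) :
    ∀ᶠ r in nhdsWithin (0:ℝ) (Set.Ioi 0),
      volume (Metric.closedBall b r \ B) ≤ ENNReal.ofReal η * volume (Metric.closedBall b r) := by
  have h1 : ENNReal.ofReal (1 - η) < 1 := by
    rw [← ENNReal.ofReal_one]
    exact ENNReal.ofReal_lt_ofReal_iff one_pos |>.2 (by linarith)
  filter_upwards [hd.eventually (eventually_gt_nhds h1), self_mem_nhdsWithin] with r hr hr0
  have hr0' : (0:ℝ) < r := hr0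
  have hball : volume (Metric.closedBall b r) ≠ ⊤ := measure_closedBall_lt_top.ne
  have hBball : volume (B ∩ Metric.closedBall b r) ≠ ⊤ :=
    ((measure_mono Set.inter_subset_right).trans_lt measure_closedBall_lt_top).ne
  have hge : ENNReal.ofReal (1 - η) * volume (Metric.closedBall b r)
      ≤ volume (B ∩ Metric.closedBall b r) := by
    have := (ENNReal.lt_div_iff_mul_lt (Or.inl (measure_closedBall_pos volume b hr0').ne')
      (Or.inl hball)).1 hr
    exact this.le
  have hdiff : volume (Metric.closedBall b r \ B)
      = volume (Metric.closedBall b r) - volume (B ∩ Metric.closedBall b r) := by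
    have : Metric.closedBall b r \ B = Metric.closedBall b r \ (B ∩ Metric.closedBall b r) := by
      ext x; simp (config := { contextual := true }) [and_comm]
    rw [this, measure_diff Set.inter_subset_right
      (hB.inter measurableSet_closedBall).nullMeasurableSet hBball]
  rw [hdiff, tsub_le_iff_right]
  calc volume (Metric.closedBall b r)
      = (ENNReal.ofReal η + ENNReal.ofReal (1 - η)) * volume (Metric.closedBall b r) := by
        rw [← ENNReal.ofReal_add hη.le (by linarith)]
        norm_num
    _ = ENNReal.ofReal η * volume (Metric.closedBall b r)
        + ENNReal.ofReal (1 - η) * volume (Metric.closedBall b r) := by ring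
    _ ≤ ENNReal.ofReal η * volume (Metric.closedBall b r)
        + volume (B ∩ Metric.closedBall b r) := by gcongr

lemma shadow {m : ℕ} {B : Set (EuclideanSpace ℝ (Fin (m + 1)))} (hB : MeasurableSet B)
    (b : EuclideanSpace ℝ (Fin (m + 1)))
    (hd : Tendsto (fun r : ℝ =>
        volume (B ∩ Metric.closedBall b r) / volume (Metric.closedBall b r))
      (nhdsWithin 0 (Set.Ioi 0)) (nhds 1)) :
    ∀ᶠ ρ in nhdsWithin (0:ℝ) (Set.Ioi 0), ∃ G : Set (EuclideanSpace ℝ (Fin m)),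
      MeasurableSet G ∧ G ⊆ tl '' B ∧ G ⊆ Metric.closedBall (tl b) ρ ∧
      volume (Metric.closedBall (tl b) ρ \ G) ≤ volume (Metric.closedBall (tl b) ρ) / 4 := by
  classical
  set u1 : ℝ≥0∞ := volume (Metric.ball (0 : EuclideanSpace ℝ (Fin m)) 1) with hu1def
  set u2 : ℝ≥0∞ := volume (Metric.ball (0 : EuclideanSpace ℝ (Fin (m+1))) 1) with hu2def
  have hu1 : u1 ≠ 0 := (measure_ball_pos volume _ one_pos).ne'
  have hu1t : u1 ≠ ⊤ := measure_ball_lt_top.ne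
  have hu2 : u2 ≠ 0 := (measure_ball_pos volume _ one_pos).ne'
  have hu2t : u2 ≠ ⊤ := measure_ball_lt_top.ne
  set d : ℝ≥0∞ := ENNReal.ofReal (2^m) * u2 with hddef
  have hd0 : d ≠ 0 := by
    simp only [hddef, ne_eq, mul_eq_zero, not_or]
    refine ⟨?_, hu2⟩
    simp only [ENNReal.ofReal_eq_zero, not_le]
    positivity
  have hdt : d ≠ ⊤ := ENNReal.mul_ne_top ENNReal.ofReal_ne_top hu2t
  set κ : ℝ≥0∞ := u1 / 4 / d with hκdef
  have hκ0 : κ ≠ 0 := by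
    simp only [hκdef, ne_eq, ENNReal.div_eq_zero_iff, not_or]
    refine ⟨⟨hu1, by norm_num⟩, hdt⟩
  have hκt : κ ≠ ⊤ :=
    (ENNReal.div_lt_top (ENNReal.div_lt_top hu1t (by norm_num)).ne hd0).ne
  set η : ℝ := min 1 κ.toReal with hηdef
  have hη0 : 0 < η := lt_min one_pos (ENNReal.toReal_pos hκ0 hκt)
  have hη1 : η ≤ 1 := min_le_left _ _
  have hηκ : ENNReal.ofReal η ≤ κ := by
    calc ENNReal.ofReal η ≤ ENNReal.ofReal κ.toReal :=
          ENNReal.ofReal_le_ofReal (min_le_right _ _)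
      _ = κ := ENNReal.ofReal_toReal hκt
  obtain ⟨r₀, hr₀pos, hr₀⟩ :=
    mem_nhdsGT_iff_exists_Ioc_subset.1 (density_eventually hB b hd hη0 hη1)
  have hr₀pos' : (0:ℝ) < r₀ := hr₀pos
  filter_upwards [Ioc_mem_nhdsGT_of_mem
    (show (0:ℝ) ∈ Set.Ico 0 (r₀/2) from ⟨le_refl 0, by linarith⟩)] with ρ hρ
  obtain ⟨hρ0, hρle⟩ := hρ
  have hdens : volume (Metric.closedBall b (2*ρ) \ B)
      ≤ ENNReal.ofReal η * volume (Metric.closedBall b (2*ρ)) :=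
    hr₀ ⟨by linarith, by linarith⟩
  set ψ := (MeasurableEquiv.toLp 2 (Fin m → ℝ)).symm with hψdef
  set t : ℝ := b 0 with htdef
  set c : EuclideanSpace ℝ (Fin m) := tl b with hcdef
  set D := Metric.closedBall c ρ with hDdef
  set Dp : Set (Fin m → ℝ) := ψ.symm ⁻¹' D with hDpdef
  have hDp : MeasurableSet Dp := ψ.symm.measurable measurableSet_closedBall
  set Bp : Set (ℝ × (Fin m → ℝ)) := (Φ m).symm ⁻¹' B with hBpdef
  have hBpm : MeasurableSet Bp := (Φ m).symm.measurable hB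
  set I := Set.Icc (t - ρ) (t + ρ) with hIdef
  set W := (I ×ˢ Dp) \ Bp with hWdef
  have hW : MeasurableSet W := (measurableSet_Icc.prod hDp).diff hBpm
  set Z : Set (Fin m → ℝ) :=
    Dp ∩ ((fun y => volume ((fun s => (s, y)) ⁻¹' W)) ⁻¹' Set.Ici (ENNReal.ofReal (2*ρ)))
    with hZdef
  have hZm : MeasurableSet Z :=
    hDp.inter ((measurable_measure_prodMk_right hW) measurableSet_Ici)
  -- Fubini bound
  have key1 : ENNReal.ofReal (2*ρ) * volume Z ≤ volume W := by
    calc ENNReal.ofReal (2*ρ) * volume Z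
        = ∫⁻ _ in Z, ENNReal.ofReal (2*ρ) := (setLIntegral_const _ _).symm
      _ ≤ ∫⁻ y in Z, volume ((fun s => (s, y)) ⁻¹' W) :=
          setLIntegral_mono (measurable_measure_prodMk_right hW) (fun y hy => hy.2)
      _ ≤ ∫⁻ y, volume ((fun s => (s, y)) ⁻¹' W) := setLIntegral_le_lintegral _ _
      _ = volume W := by rw [Measure.volume_eq_prod, Measure.prod_apply_symm hW]
  -- cylinder inside ball
  have hcyl : I ×ˢ Dp ⊆ (Φ m).symm ⁻¹' (Metric.closedBall b (2*ρ)) := by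
    rintro ⟨s, y⟩ ⟨hs, hy⟩
    have hx0 : ((Φ m).symm (s, y)) 0 = s := Φ_symm_apply_zero m s y
    have hxt : tl ((Φ m).symm (s, y)) = ψ.symm y := Φ_symm_apply_tl m s y
    simp only [Set.mem_preimage, Metric.mem_closedBall]
    rw [dist_eq_tl, hx0, hxt]
    have h1 : dist s t ≤ ρ := by
      rw [Real.dist_eq, abs_sub_le_iff]
      exact ⟨by linarith [hs.2], by linarith [hs.1]⟩
    have h2 : dist (ψ.symm y) c ≤ ρ := hy
    have hρ2 : (0:ℝ) ≤ 2*ρ := by linarith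
    calc Real.sqrt (dist s (b 0) ^ 2 + dist (ψ.symm y) (tl b) ^ 2)
        ≤ Real.sqrt ((2*ρ)^2) := by
          apply Real.sqrt_le_sqrt
          have h1' : dist s (b 0) ≤ ρ := h1
          have h2' : dist (ψ.symm y) (tl b) ≤ ρ := h2
          have e1 : dist s (b 0) ^ 2 ≤ ρ^2 := by
            nlinarith [dist_nonneg (x := s) (y := b 0)]
          have e2 : dist (ψ.symm y) (tl b) ^ 2 ≤ ρ^2 := by
            nlinarith [dist_nonneg (x := ψ.symm y) (y := tl b)]
          nlinarith
      _ = 2*ρ := Real.sqrt_sq hρ2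
  have key2 : volume W ≤ ENNReal.ofReal η * volume (Metric.closedBall b (2*ρ)) := by
    refine le_trans (measure_mono (show W ⊆ (Φ m).symm ⁻¹' (Metric.closedBall b (2*ρ) \ B)
      from fun p hp => ⟨hcyl hp.1, hp.2⟩)) ?_
    rw [((Φ_measurePreserving m).symm _).measure_preimage
      ((measurableSet_closedBall.diff hB)).nullMeasurableSet]
    exact hdens
  -- volumes of balls
  have hDvol : volume D = ENNReal.ofReal (ρ^m) * u1 := by
    rw [hDdef, Measure.addHaar_closedBall volume c hρ0.le, finrank_euclideanSpace_fin]
  have hBvol : volume (Metric.closedBall b (2*ρ))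
      = ENNReal.ofReal ((2*ρ)^(m+1)) * u2 := by
    rw [Measure.addHaar_closedBall volume b (by linarith), finrank_euclideanSpace_fin]
  -- Z is small
  have hZD : volume Z ≤ volume D / 4 := by
    have hX0 : ENNReal.ofReal (2*ρ) ≠ 0 := by
      simp only [ne_eq, ENNReal.ofReal_eq_zero, not_le]; linarith
    rw [← ENNReal.mul_le_mul_iff_right hX0 ENNReal.ofReal_ne_top]
    calc ENNReal.ofReal (2*ρ) * volume Z ≤ volume W := key1
      _ ≤ ENNReal.ofReal η * volume (Metric.closedBall b (2*ρ)) := key2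
      _ = (ENNReal.ofReal η * d) * (ENNReal.ofReal (2*ρ) * ENNReal.ofReal (ρ^m)) := by
          rw [hBvol, show ((2*ρ)^(m+1) : ℝ) = (2^m) * ((2*ρ) * (ρ^m)) by ring,
            ENNReal.ofReal_mul (by positivity), ENNReal.ofReal_mul (by positivity), hddef]
          ring
      _ ≤ (u1 / 4) * (ENNReal.ofReal (2*ρ) * ENNReal.ofReal (ρ^m)) := by
          gcongr
          calc ENNReal.ofReal η * d ≤ κ * d := by gcongr
            _ = u1 / 4 := ENNReal.div_mul_cancel hd0 hdt
      _ = ENNReal.ofReal (2*ρ) * (volume D / 4) := by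
          rw [hDvol, div_eq_mul_inv, div_eq_mul_inv]; ring
  -- the good set
  refine ⟨ψ ⁻¹' (Dp \ Z), ψ.measurable (hDp.diff hZm), ?_, ?_, ?_⟩
  · -- inside the shadow
    rintro z hz
    have hzD : ψ z ∈ Dp := hz.1
    have hnot : ¬ (ENNReal.ofReal (2*ρ) ≤ volume ((fun s => (s, ψ z)) ⁻¹' W)) :=
      fun h => hz.2 ⟨hzD, h⟩
    have hex : ¬ (∀ s ∈ I, (s, ψ z) ∈ W) := by
      intro hall
      apply hnot
      calc ENNReal.ofReal (2*ρ) = volume I := by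
            rw [hIdef, Real.volume_Icc]; congr 1; ring
        _ ≤ volume ((fun s => (s, ψ z)) ⁻¹' W) := measure_mono fun s hs => hall s hs
    push_neg at hex
    obtain ⟨s, hsI, hsW⟩ := hex
    have hmem : (s, ψ z) ∈ Bp := by
      by_contra h
      exact hsW ⟨⟨hsI, hzD⟩, h⟩
    refine ⟨(Φ m).symm (s, ψ z), hmem, ?_⟩
    rw [Φ_symm_apply_tl, ← hψdef, MeasurableEquiv.symm_apply_apply]
  · -- inside the ball
    intro z hz
    have : ψ.symm (ψ z) ∈ D := hz.1
    rwa [MeasurableEquiv.symm_apply_apply] at this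
  · -- measure estimate
    have hsub : D \ ψ ⁻¹' (Dp \ Z) ⊆ ψ ⁻¹' Z := by
      rintro z ⟨hzD, hzG⟩
      have hzDp : ψ z ∈ Dp := by
        simp only [hDpdef, Set.mem_preimage, MeasurableEquiv.symm_apply_apply]
        exact hzD
      by_contra h
      exact hzG ⟨hzDp, h⟩
    refine le_trans (measure_mono hsub) ?_
    rw [(EuclideanSpace.volume_preserving_symm_measurableEquiv_toLp (Fin m)).measure_preimage
      hZm.nullMeasurableSet]
    exact hZD


def J {m : ℕ} (z : EuclideanSpace ℝ (Fin m)) : EuclideanSpace ℝ (Fin (m + 1)) :=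
  WithLp.toLp 2 (Fin.cons (0:ℝ) z.ofLp : Fin (m+1) → ℝ)


lemma tl_J {m : ℕ} (z : EuclideanSpace ℝ (Fin m)) : tl (J z) = z := by
  ext j
  show (Fin.cons 0 z.ofLp : Fin (m+1) → ℝ) j.succ = z j
  simp

lemma J_zero_coord {m : ℕ} (z : EuclideanSpace ℝ (Fin m)) : J z 0 = 0 := rfl

lemma J_isometry {m : ℕ} : Isometry (J (m := m)) := by
  apply Isometry.of_dist_eq
  intro z z'
  rw [dist_eq_tl, tl_J, tl_J, J_zero_coord, J_zero_coord]
  simp [Real.sqrt_sq dist_nonneg]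


end Stmt5Aux

open Stmt5Aux

theorem stmt_5' (m : ℕ) (A₁ A₂ : Set (EuclideanSpace ℝ (Fin (m+1))))
    (hA₁ : MeasurableSet A₁) (hA₂ : MeasurableSet A₂)
    (a₁ a₂ : EuclideanSpace ℝ (Fin (m+1))) (hne : a₁ ≠ a₂)
    (hd₁ : Tendsto (fun r : ℝ =>
        volume (A₁ ∩ Metric.closedBall a₁ r) / volume (Metric.closedBall a₁ r))
      (nhdsWithin 0 (Set.Ioi 0)) (nhds 1))
    (hd₂ : Tendsto (fun r : ℝ =>
        volume (A₂ ∩ Metric.closedBall a₂ r) / volume (Metric.closedBall a₂ r))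
      (nhdsWithin 0 (Set.Ioi 0)) (nhds 1)) :
    0 < μH[((m+1 : ℕ) : ℝ) - 1]
      ((fun x => (Submodule.orthogonalProjectionOnto (ℝ ∙ (‖a₂ - a₁‖⁻¹ • (a₂ - a₁)))ᗮ x :
          EuclideanSpace ℝ (Fin (m+1)))) '' A₁ ∩
        (fun x => (Submodule.orthogonalProjectionOnto (ℝ ∙ (‖a₂ - a₁‖⁻¹ • (a₂ - a₁)))ᗮ x :
          EuclideanSpace ℝ (Fin (m+1)))) '' A₂) := by
  classical
  have hexp : ((m+1 : ℕ) : ℝ) - 1 = (m : ℝ) := by push_cast; ring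
  rw [hexp]
  set v : EuclideanSpace ℝ (Fin (m+1)) := ‖a₂ - a₁‖⁻¹ • (a₂ - a₁) with hvdef
  have hsubne : a₂ - a₁ ≠ 0 := sub_ne_zero.2 (Ne.symm hne)
  have hv : ‖v‖ = 1 := norm_smul_inv_norm (𝕜 := ℝ) hsubne
  -- orthonormal basis with bas 0 = v
  have hcard : Module.finrank ℝ (EuclideanSpace ℝ (Fin (m+1))) = Fintype.card (Fin (m+1)) := by
    simp [finrank_euclideanSpace_fin]
  have horth : Orthonormal ℝ (Set.restrict {(0 : Fin (m+1))} (fun _ => v)) := by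
    constructor
    · intro i; exact hv
    · intro i j hij
      exact absurd (Subtype.ext (i.2.trans j.2.symm)) hij
  obtain ⟨bas, hbas⟩ := Orthonormal.exists_orthonormalBasis_extension_of_card_eq hcard horth
  have hbv : bas 0 = v := hbas 0 rfl
  set e := bas.repr with hedef
  have hev : e v = EuclideanSpace.single 0 1 := by
    rw [← hbv]; exact bas.repr_self 0
  set f : EuclideanSpace ℝ (Fin (m+1)) → EuclideanSpace ℝ (Fin (m+1)) :=
    fun x => (Submodule.orthogonalProjectionOnto (ℝ ∙ v)ᗮ x : EuclideanSpace ℝ (Fin (m+1))) with hfdef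
  have hef : ∀ x, e (f x) = J (tl (e x)) := by
    intro x
    have hfx : f x = x - ⟪v, x⟫ • v := by
      rw [hfdef]
      simp only
      rw [← Submodule.starProjection_apply, Submodule.starProjection_orthogonal_val,
        Submodule.starProjection_singleton, hv]
      norm_num
    have hinner : ⟪v, x⟫ = e x 0 := by
      rw [← LinearIsometryEquiv.inner_map_map e v x, hev, EuclideanSpace.inner_single_left]
      simp
    rw [hfx, map_sub, LinearIsometryEquiv.map_smul, hev, hinner]
    ext j
    refine Fin.cases ?_ (fun k => ?_) j
    · show e x 0 - e x 0 • (EuclideanSpace.single (0 : Fin (m+1)) (1:ℝ)) 0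
        = (Fin.cons 0 (tl (e x)).ofLp : Fin (m+1) → ℝ) 0
      simp [EuclideanSpace.single_apply]
    · show e x k.succ - e x 0 • (EuclideanSpace.single (0 : Fin (m+1)) (1:ℝ)) k.succ
        = (Fin.cons 0 (tl (e x)).ofLp : Fin (m+1) → ℝ) k.succ
      simp [EuclideanSpace.single_apply, Fin.succ_ne_zero, tl]
  -- transported sets and density points
  have hepres : MeasurePreserving e volume volume := e.measurePreserving
  set B₁ := e '' A₁ with hB₁def
  set B₂ := e '' A₂ with hB₂def
  have himgmeas : ∀ (A : Set (EuclideanSpace ℝ (Fin (m+1)))), MeasurableSet A →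
      MeasurableSet (e '' A) := by
    intro A hA
    rw [show e '' A = e.toMeasurableEquiv.symm ⁻¹' A from
      (Equiv.image_eq_preimage_symm e.toMeasurableEquiv.toEquiv A)]
    exact e.toMeasurableEquiv.symm.measurable hA
  have hB₁m : MeasurableSet B₁ := himgmeas A₁ hA₁
  have hB₂m : MeasurableSet B₂ := himgmeas A₂ hA₂
  have hvolimg : ∀ (S : Set (EuclideanSpace ℝ (Fin (m+1)))), MeasurableSet S →
      volume (e '' S) = volume S := by
    intro S hS
    rw [show e '' S = e.toMeasurableEquiv.symm ⁻¹' S from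
      Equiv.image_eq_preimage_symm e.toMeasurableEquiv.toEquiv S]
    exact (hepres.symm e.toMeasurableEquiv).measure_preimage hS.nullMeasurableSet
  have hball : ∀ (a : EuclideanSpace ℝ (Fin (m+1))) (r : ℝ),
      e '' Metric.closedBall a r = Metric.closedBall (e a) r := by
    intro a r
    ext y
    constructor
    · rintro ⟨x, hx, rfl⟩
      simpa [Metric.mem_closedBall, e.dist_map] using hx
    · intro hy
      exact ⟨e.symm y, by
        simpa [Metric.mem_closedBall, ← e.dist_map (e.symm y) a,
          LinearIsometryEquiv.apply_symm_apply] using hy, by simp⟩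
  have hdens' : ∀ (A : Set (EuclideanSpace ℝ (Fin (m+1)))), MeasurableSet A →
      ∀ (a : EuclideanSpace ℝ (Fin (m+1))),
      Tendsto (fun r : ℝ =>
        volume (A ∩ Metric.closedBall a r) / volume (Metric.closedBall a r))
        (nhdsWithin 0 (Set.Ioi 0)) (nhds 1) →
      Tendsto (fun r : ℝ =>
        volume ((e '' A) ∩ Metric.closedBall (e a) r) / volume (Metric.closedBall (e a) r))
        (nhdsWithin 0 (Set.Ioi 0)) (nhds 1) := by
    intro A hA a hd
    have : ∀ r : ℝ,
        volume ((e '' A) ∩ Metric.closedBall (e a) r) / volume (Metric.closedBall (e a) r)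
        = volume (A ∩ Metric.closedBall a r) / volume (Metric.closedBall a r) := by
      intro r
      rw [← hball a r, ← Set.image_inter e.injective,
        hvolimg _ (hA.inter measurableSet_closedBall), hvolimg _ measurableSet_closedBall]
    simpa only [this] using hd
  have hs₁ := Stmt5Aux.shadow hB₁m (e a₁) (hdens' A₁ hA₁ a₁ hd₁)
  have hs₂ := Stmt5Aux.shadow hB₂m (e a₂) (hdens' A₂ hA₂ a₂ hd₂)
  -- tails of the two centers agree
  have htail : tl (e a₂) = tl (e a₁) := by
    have hnorm : ‖a₂ - a₁‖ • v = a₂ - a₁ := by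
      rw [hvdef, smul_smul, mul_inv_cancel₀ (norm_ne_zero_iff.2 hsubne), one_smul]
    have hd : e a₂ - e a₁ = ‖a₂ - a₁‖ • EuclideanSpace.single 0 1 := by
      calc e a₂ - e a₁ = e (a₂ - a₁) := (map_sub e a₂ a₁).symm
        _ = e (‖a₂ - a₁‖ • v) := congrArg e hnorm.symm
        _ = ‖a₂ - a₁‖ • e v := by rw [_root_.map_smul]
        _ = ‖a₂ - a₁‖ • EuclideanSpace.single 0 1 := by rw [hev]
    ext j
    have := congrFun (congrArg (fun w : EuclideanSpace ℝ (Fin (m+1)) => (w : Fin (m+1) → ℝ)) hd)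
      j.succ
    have h0 : (EuclideanSpace.single (0 : Fin (m+1)) (1:ℝ)) j.succ = 0 := by
      simp [EuclideanSpace.single_apply, Fin.succ_ne_zero]
    simp only [PiLp.sub_apply, PiLp.smul_apply] at this
    rw [h0] at this
    simp only [smul_eq_mul, mul_zero] at this
    show (e a₂) j.succ = (e a₁) j.succ
    linarith
  -- pick a common radius
  obtain ⟨ρ, hρall⟩ := (hs₁.and (hs₂.and self_mem_nhdsWithin)).exists
  obtain ⟨hG₁ex, hG₂ex, hρpos⟩ := hρall
  obtain ⟨G₁, hG₁m, hG₁B, hG₁D, hG₁v⟩ := hG₁ex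
  obtain ⟨G₂, hG₂m, hG₂B, hG₂D, hG₂v⟩ := hG₂ex
  rw [htail] at hG₂D hG₂v
  have hρ0 : (0:ℝ) < ρ := hρpos
  set D := Metric.closedBall (tl (e a₁)) ρ with hDdef
  have hDpos : 0 < volume D := measure_closedBall_pos volume _ hρ0
  have hDfin : volume D ≠ ⊤ := measure_closedBall_lt_top.ne
  -- the two shadows overlap on positive measure
  have hG12 : 0 < volume (G₁ ∩ G₂) := by
    by_contra h
    push_neg at h
    have h0 : volume (G₁ ∩ G₂) = 0 := le_antisymm h zero_le
    have hcover : D ⊆ (D \ G₁) ∪ (D \ G₂) ∪ (G₁ ∩ G₂) := by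
      intro z hz
      by_cases h1 : z ∈ G₁
      · by_cases h2 : z ∈ G₂
        · exact Or.inr ⟨h1, h2⟩
        · exact Or.inl (Or.inr ⟨hz, h2⟩)
      · exact Or.inl (Or.inl ⟨hz, h1⟩)
    have hhalf : volume D ≤ volume D / 2 := by
      calc volume D ≤ volume ((D \ G₁) ∪ (D \ G₂) ∪ (G₁ ∩ G₂)) := measure_mono hcover
        _ ≤ volume (D \ G₁) + volume (D \ G₂) + volume (G₁ ∩ G₂) :=
            le_trans (measure_union_le _ _) (by gcongr; exact measure_union_le _ _)
        _ ≤ volume D / 4 + volume D / 4 + 0 := by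
            rw [h0]; gcongr
        _ = volume D / 2 := by
            rw [add_zero, ENNReal.div_add_div_same, ← two_mul,
              show (4:ℝ≥0∞) = 2 * 2 by norm_num,
              ENNReal.mul_div_mul_left _ _ (by norm_num) (by norm_num)]
    exact absurd hhalf (ENNReal.half_lt_self hDpos.ne' hDfin).not_ge
  -- transport to Hausdorff measure
  set S := tl '' B₁ ∩ tl '' B₂ with hSdef
  have hS12 : G₁ ∩ G₂ ⊆ S := fun z hz => ⟨hG₁B hz.1, hG₂B hz.2⟩
  set T := (f '' A₁) ∩ (f '' A₂) with hTdef
  have himg : e '' T = J '' S := by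
    rw [hTdef, Set.image_inter e.injective]
    have h1 : ∀ (A : Set (EuclideanSpace ℝ (Fin (m+1)))), e '' (f '' A) = J '' (tl '' (e '' A)) := by
      intro A
      rw [← Set.image_comp, ← Set.image_comp, ← Set.image_comp]
      exact Set.image_congr' (fun x => hef x) (s := A)
    rw [h1, h1, hSdef, ← Set.image_inter J_isometry.injective, ← hB₁def, ← hB₂def]
  have hμHT : μH[(m:ℝ)] T = μH[(m:ℝ)] S := by
    calc μH[(m:ℝ)] T = μH[(m:ℝ)] (e '' T) :=
          (e.isometry.hausdorffMeasure_image (Or.inr e.surjective) T).symm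
      _ = μH[(m:ℝ)] (J '' S) := by rw [himg]
      _ = μH[(m:ℝ)] S := J_isometry.hausdorffMeasure_image (Or.inl (by positivity)) S
  -- lower bound Hausdorff measure by Lebesgue via the sup-norm comparison
  set ψ := (MeasurableEquiv.toLp 2 (Fin m → ℝ)).symm with hψdef
  have hlip : LipschitzWith 1 (⇑ψ) := by
    rw [hψdef, MeasurableEquiv.coe_toLp_symm]
    exact PiLp.lipschitzWith_ofLp 2 (fun _ : Fin m => ℝ)
  have hvolS : volume (ψ '' S) ≤ μH[(m:ℝ)] S := by
    have h1 : μH[(m:ℝ)] (ψ '' S) ≤ 1 ^ (m:ℝ) * μH[(m:ℝ)] S :=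
      hlip.hausdorffMeasure_image_le (by positivity) S
    have h2 : (μH[(m:ℝ)] : Measure (Fin m → ℝ)) = volume := by
      have := hausdorffMeasure_pi_real (ι := Fin m)
      simpa using this
    rw [h2] at h1
    simpa using h1
  have hψG : volume (ψ '' (G₁ ∩ G₂)) = volume (G₁ ∩ G₂) := by
    rw [show ψ '' (G₁ ∩ G₂) = ψ.symm ⁻¹' (G₁ ∩ G₂) from
      Equiv.image_eq_preimage_symm ψ.toEquiv _]
    exact ((EuclideanSpace.volume_preserving_symm_measurableEquiv_toLp (Fin m)).symm ψ).measure_preimage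
      (hG₁m.inter hG₂m).nullMeasurableSet
  have : 0 < volume (ψ '' S) := by
    calc (0:ℝ≥0∞) < volume (G₁ ∩ G₂) := hG12
      _ = volume (ψ '' (G₁ ∩ G₂)) := hψG.symm
      _ ≤ volume (ψ '' S) := measure_mono (Set.image_mono hS12)
  calc (0:ℝ≥0∞) < volume (ψ '' S) := this
    _ ≤ μH[(m:ℝ)] S := hvolS
    _ = μH[(m:ℝ)] T := hμHT.symm



/-- If `a₁, a₂` are distinct Lebesgue density points of measurable sets
`A₁, A₂ ⊆ ℝⁿ` (`n ≥ 1`) and `v = (a₂ - a₁)/‖a₂ - a₁‖`, then the images of `A₁` and `A₂` under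
the orthogonal projection onto `v⊥` intersect in a set of positive `(n-1)`-dimensional
Hausdorff measure. -/
theorem stmt_5 (n : ℕ) (hn : 1 ≤ n) (A₁ A₂ : Set (EuclideanSpace ℝ (Fin n)))
    (hA₁ : MeasurableSet A₁) (hA₂ : MeasurableSet A₂)
    (a₁ a₂ : EuclideanSpace ℝ (Fin n)) (hne : a₁ ≠ a₂)
    (hd₁ : Tendsto (fun r : ℝ =>
        volume (A₁ ∩ Metric.closedBall a₁ r) / volume (Metric.closedBall a₁ r))
      (nhdsWithin 0 (Set.Ioi 0)) (nhds 1))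
    (hd₂ : Tendsto (fun r : ℝ =>
        volume (A₂ ∩ Metric.closedBall a₂ r) / volume (Metric.closedBall a₂ r))
      (nhdsWithin 0 (Set.Ioi 0)) (nhds 1)) :
    0 < μH[(n : ℝ) - 1]
      ((fun x => (Submodule.orthogonalProjectionOnto (ℝ ∙ (‖a₂ - a₁‖⁻¹ • (a₂ - a₁)))ᗮ x :
          EuclideanSpace ℝ (Fin n))) '' A₁ ∩
        (fun x => (Submodule.orthogonalProjectionOnto (ℝ ∙ (‖a₂ - a₁‖⁻¹ • (a₂ - a₁)))ᗮ x :
          EuclideanSpace ℝ (Fin n))) '' A₂) := by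
  obtain ⟨m, rfl⟩ : ∃ m, n = m + 1 := ⟨n - 1, (Nat.succ_pred_eq_of_pos hn).symm⟩
  exact stmt_5' m A₁ A₂ hA₁ hA₂ a₁ a₂ hne hd₁ hd₂
end
end

section
/- Let n ≥ 1, let A ⊆ ℝⁿ be a Lebesgue measurable set, and let x be a Lebesgue density point of A. Let v ∈ ℝⁿ be a unit vector, let H = v⊥ = {y ∈ ℝⁿ : ⟨y, v⟩ = 0}, and let p_v denote the orthogonal projection of ℝⁿ onto H. Then the part of the (n−1)-dimensional disk D_r = H ∩ B(p_v(x), r) not covered by the projection of A becomes negligible: ℋ^{n−1}(D_r \ p_v(A)) / ℋ^{n−1}(D_r) → 0 as r → 0⁺; equivalently, for every ε > 0 there is r₀ > 0 such that ℋ^{n−1}(D_r ∩ p_v(A)) ≥ (1 − ε) ℋ^{n−1}(D_r) for all 0 < r < r₀. -/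
open MeasureTheory Filter

open scoped RealInnerProductSpace ENNReal NNReal
open Metric Module

set_option maxHeartbeats 2000000 in
set_option synthInstance.maxHeartbeats 1000000 in
/-- At a Lebesgue density point `x` of a measurable set `A ⊆ ℝⁿ` (`n ≥ 1`),
for any unit vector `v`, the fraction of the `(n-1)`-disk
`D_r = v⊥ ∩ B(p_v(x), r)` not covered by the projection `p_v(A)` tends to `0` as `r → 0⁺`
(computed with `(n-1)`-dimensional Hausdorff measure). -/
theorem stmt_8 (n : ℕ) (hn : 1 ≤ n) (A : Set (EuclideanSpace ℝ (Fin n)))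
    (hA : MeasurableSet A) (x : EuclideanSpace ℝ (Fin n))
    (hx : Tendsto (fun r : ℝ =>
        volume (A ∩ Metric.closedBall x r) / volume (Metric.closedBall x r))
      (nhdsWithin 0 (Set.Ioi 0)) (nhds 1))
    (v : EuclideanSpace ℝ (Fin n)) (hv : ‖v‖ = 1)
    (pv : EuclideanSpace ℝ (Fin n) → EuclideanSpace ℝ (Fin n))
    (hpv : pv = fun y => (Submodule.orthogonalProjectionOnto (ℝ ∙ v)ᗮ y : EuclideanSpace ℝ (Fin n))) :
    Tendsto (fun r : ℝ =>
        μH[(n : ℝ) - 1]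
            (({y : EuclideanSpace ℝ (Fin n) | ⟪y, v⟫ = 0} ∩ Metric.closedBall (pv x) r) \
              pv '' A) /
          μH[(n : ℝ) - 1]
            ({y : EuclideanSpace ℝ (Fin n) | ⟪y, v⟫ = 0} ∩ Metric.closedBall (pv x) r))
      (nhdsWithin 0 (Set.Ioi 0)) (nhds 0) := by
  subst hpv
  beta_reduce
  have hv0 : v ≠ 0 := by intro h; rw [h, norm_zero] at hv; norm_num at hv
  set K : Submodule ℝ (EuclideanSpace ℝ (Fin n)) := (ℝ ∙ v)ᗮ with hK
  have hKv : v ∈ Kᗮ := by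
    rw [hK, Submodule.orthogonal_orthogonal]
    exact Submodule.mem_span_singleton_self v
  have hvK : ∀ y : K, ⟪(y : EuclideanSpace ℝ (Fin n)), v⟫ = 0 := fun y =>
    Submodule.mem_orthogonal_singleton_iff_inner_left.mp y.2
  have hrankK : Module.finrank ℝ K = n - 1 := by
    have h1 : Module.finrank ℝ (ℝ ∙ v) = 1 := finrank_span_singleton hv0
    have h2 := Submodule.finrank_add_finrank_orthogonal (K := (ℝ ∙ v))
    rw [← hK] at h2
    have h3 : Module.finrank ℝ (EuclideanSpace ℝ (Fin n)) = n := finrank_euclideanSpace_fin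
    rw [h3] at h2
    omega
  have hproj_self : ∀ y : K,
      (Submodule.orthogonalProjectionOnto K (y : EuclideanSpace ℝ (Fin n)) : EuclideanSpace ℝ (Fin n)) = y :=
    fun y => Submodule.starProjection_eq_self_iff.mpr y.2
  have hproj_v : Submodule.orthogonalProjectionOnto K v = 0 :=
    Submodule.orthogonalProjectionOnto_apply_of_mem_orthogonal hKv
  have hfiber : ∀ (y : K) (t : ℝ),
      (Submodule.orthogonalProjectionOnto K ((y : EuclideanSpace ℝ (Fin n)) + t • v) :
        EuclideanSpace ℝ (Fin n)) = y := by
    intro y t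
    have h5 : Submodule.orthogonalProjectionOnto K ((y : EuclideanSpace ℝ (Fin n)) + t • v)
        = Submodule.orthogonalProjectionOnto K (y : EuclideanSpace ℝ (Fin n)) := by
      rw [map_add, LinearMapClass.map_smul, hproj_v, smul_zero, add_zero]
    rw [h5, hproj_self]
  have hdecomp : ∀ z : EuclideanSpace ℝ (Fin n), ∃ t : ℝ,
      z = (Submodule.orthogonalProjectionOnto K z : EuclideanSpace ℝ (Fin n)) + t • v := by
    intro z
    have hz : z - Submodule.orthogonalProjectionOnto K z ∈ Kᗮ := Submodule.sub_starProjection_mem_orthogonal z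
    have h4 : Kᗮ = ℝ ∙ v := by rw [hK, Submodule.orthogonal_orthogonal]
    rw [h4] at hz
    obtain ⟨t, ht⟩ := Submodule.mem_span_singleton.mp hz
    exact ⟨t, by rw [ht]; abel⟩
  -- the linear equivalence between K × ℝ and the ambient space
  set L : (K × ℝ) →ₗ[ℝ] EuclideanSpace ℝ (Fin n) :=
    K.subtype.coprod (LinearMap.toSpanSingleton ℝ _ v) with hL
  have hLapp : ∀ p : K × ℝ, L p = (p.1 : EuclideanSpace ℝ (Fin n)) + p.2 • v := fun p => rfl
  have hLinj : Function.Injective L := by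
    rw [injective_iff_map_eq_zero]
    rintro ⟨y, t⟩ h
    rw [hLapp] at h
    have ht : t = 0 := by
      have h2 : ⟪(y : EuclideanSpace ℝ (Fin n)) + t • v, v⟫ = 0 := by
        rw [h, inner_zero_left]
      rw [inner_add_left, real_inner_smul_left, hvK y, real_inner_self_eq_norm_mul_norm,
        hv] at h2
      linarith
    subst ht
    simp only [zero_smul, add_zero] at h
    have hy : y = 0 := Subtype.coe_injective (by simpa using h)
    simp [hy]
  have hLsurj : Function.Surjective L := by
    intro z
    obtain ⟨t, ht⟩ := hdecomp z
    exact ⟨(Submodule.orthogonalProjectionOnto K z, t), by rw [hLapp]; exact ht.symm⟩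
  set e : (K × ℝ) ≃L[ℝ] EuclideanSpace ℝ (Fin n) :=
    (LinearEquiv.ofBijective L ⟨hLinj, hLsurj⟩).toContinuousLinearEquiv with he
  have heapp : ∀ p : K × ℝ, e p = (p.1 : EuclideanSpace ℝ (Fin n)) + p.2 • v := fun p => rfl
  -- measures
  have hexp : (n : ℝ) - 1 = ((n - 1 : ℕ) : ℝ) := by
    rw [Nat.cast_sub hn]; norm_num
  set μK : Measure K := μH[(n : ℝ) - 1] with hμK
  haveI hHaarK : μK.IsAddHaarMeasure := by
    rw [hμK, hexp, ← hrankK]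
    exact MeasureTheory.isAddHaarMeasure_hausdorffMeasure
  set ν : Measure (K × ℝ) := μK.prod volume with hν
  haveI : ν.IsAddHaarMeasure := by rw [hν]; infer_instance
  haveI : (ν.map e).IsAddHaarMeasure := e.isAddHaarMeasure_map ν
  set c' : ℝ≥0 := Measure.addHaarScalarFactor (ν.map e) volume with hc'
  have hmap : ν.map e = c' • (volume : Measure (EuclideanSpace ℝ (Fin n))) :=
    Measure.isAddLeftInvariant_eq_smul _ _
  -- set identities
  have hset : {y : EuclideanSpace ℝ (Fin n) | ⟪y, v⟫ = 0} = (K : Set _) := by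
    ext y
    simp only [Set.mem_setOf_eq, hK, SetLike.mem_coe,
      Submodule.mem_orthogonal_singleton_iff_inner_left]
  rw [hset]
  set px : EuclideanSpace ℝ (Fin n) :=
    (Submodule.orthogonalProjectionOnto K x : EuclideanSpace ℝ (Fin n)) with hpx
  set pA : Set (EuclideanSpace ℝ (Fin n)) :=
    (fun y => (Submodule.orthogonalProjectionOnto K y : EuclideanSpace ℝ (Fin n))) '' A with hpA
  set D : ℝ → Set (EuclideanSpace ℝ (Fin n)) :=
    fun r => (K : Set (EuclideanSpace ℝ (Fin n))) ∩ closedBall px r with hD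
  have hDball : ∀ r : ℝ,
      D r = (fun y : K => (y : EuclideanSpace ℝ (Fin n))) ''
        closedBall (Submodule.orthogonalProjectionOnto K x) r := by
    intro r; ext z
    constructor
    · rintro ⟨hzK, hz⟩
      exact ⟨⟨z, hzK⟩, by simpa [Metric.mem_closedBall, Subtype.dist_eq, hpx] using hz, rfl⟩
    · rintro ⟨w, hw, rfl⟩
      exact ⟨w.2, by simpa [Metric.mem_closedBall, Subtype.dist_eq, hpx] using hw⟩
  have hd05 : (0:ℝ) ≤ (n : ℝ) - 1 := by
    have : (1:ℝ) ≤ (n:ℝ) := by exact_mod_cast hn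
    linarith
  set cK : ℝ≥0∞ := μK (closedBall 0 1) with hcK
  have hcK0 : cK ≠ 0 := (measure_closedBall_pos μK 0 one_pos).ne'
  have hcKtop : cK ≠ ∞ := measure_closedBall_lt_top.ne
  have hDen : ∀ r : ℝ, 0 ≤ r →
      μH[(n:ℝ)-1] (D r) = ENNReal.ofReal (r ^ (n-1)) * cK := by
    intro r hr
    rw [hDball r, Isometry.hausdorffMeasure_image isometry_subtype_coe (Or.inl hd05)]
    have h6 := Measure.addHaar_closedBall' μK (Submodule.orthogonalProjectionOnto K x) hr
    rw [hrankK] at h6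
    exact h6
  set S : ℝ → Set K :=
    fun r => (fun y : K => (y : EuclideanSpace ℝ (Fin n))) ⁻¹' (D r \ pA) with hS
  have hSim : ∀ r, (fun y : K => (y : EuclideanSpace ℝ (Fin n))) '' S r = D r \ pA := by
    intro r
    rw [hS, Set.image_preimage_eq_inter_range]
    apply Set.inter_eq_self_of_subset_left
    intro z hz
    exact ⟨⟨z, hz.1.1⟩, rfl⟩
  have hNum : ∀ r, μH[(n:ℝ)-1] (D r \ pA) = μK (S r) := by
    intro r
    rw [← hSim r, Isometry.hausdorffMeasure_image isometry_subtype_coe (Or.inl hd05)]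
  -- decomposition of x
  have hxv : px + ⟪x, v⟫ • v = x := by
    obtain ⟨t, ht⟩ := hdecomp x
    have h7 : ⟪x, v⟫ = t := by
      nth_rewrite 1 [ht]
      rw [inner_add_left, real_inner_smul_left, hvK (Submodule.orthogonalProjectionOnto K x),
        real_inner_self_eq_norm_mul_norm, hv]
      ring
    rw [← h7, ← hpx] at ht
    exact ht.symm
  -- key estimate via Fubini
  have hkey1 : ∀ r : ℝ, 0 < r →
      μK (S r) * ENNReal.ofReal (2*r) ≤
        (c' : ℝ≥0∞) * volume (closedBall x (2*r) \ A) := by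
    intro r hr
    have hincl : S r ×ˢ Set.Icc (⟪x, v⟫ - r) (⟪x, v⟫ + r) ⊆
        ⇑e ⁻¹' (closedBall x (2*r) \ A) := by
      rintro ⟨y, t⟩ ⟨hy, ht⟩
      simp only [Set.mem_preimage, heapp]
      have hy' : (y : EuclideanSpace ℝ (Fin n)) ∈ D r \ pA := hy
      rw [Set.mem_Icc] at ht
      constructor
      · have hna : ∀ (w : EuclideanSpace ℝ (Fin n)) (s : ℝ),
            (y : EuclideanSpace ℝ (Fin n)) + t • v - (w + s • v)
              = ((y : EuclideanSpace ℝ (Fin n)) - w) + (t - s) • v := by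
          intro w s; rw [sub_smul]; abel
        rw [mem_closedBall, dist_eq_norm, ← hxv, hna]
        have h1 : ‖(y : EuclideanSpace ℝ (Fin n)) - px‖ ≤ r := by
          have h8 := hy'.1.2
          rwa [mem_closedBall, dist_eq_norm] at h8
        have h2 : ‖(t - ⟪x, v⟫) • v‖ ≤ r := by
          rw [norm_smul, hv, mul_one, Real.norm_eq_abs, abs_le]
          constructor
          · linarith [ht.1]
          · linarith [ht.2]
        calc ‖((y : EuclideanSpace ℝ (Fin n)) - px) + (t - ⟪x, v⟫) • v‖
            ≤ ‖(y : EuclideanSpace ℝ (Fin n)) - px‖ + ‖(t - ⟪x, v⟫) • v‖ := norm_add_le _ _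
          _ ≤ r + r := add_le_add h1 h2
          _ = 2*r := by ring
      · intro hzA
        exact hy'.2 ⟨(y : EuclideanSpace ℝ (Fin n)) + t • v, hzA, hfiber y t⟩
    calc μK (S r) * ENNReal.ofReal (2*r)
        = ν (S r ×ˢ Set.Icc (⟪x, v⟫ - r) (⟪x, v⟫ + r)) := by
          rw [hν, Measure.prod_prod, Real.volume_Icc]
          congr 2
          ring
      _ ≤ ν (⇑e ⁻¹' (closedBall x (2*r) \ A)) := measure_mono hincl
      _ = (ν.map e) (closedBall x (2*r) \ A) := by
          rw [Measure.map_apply e.continuous.measurable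
            (measurableSet_closedBall.diff hA)]
      _ = (c' : ℝ≥0∞) * volume (closedBall x (2*r) \ A) := by
          rw [hmap, Measure.smul_apply, ENNReal.smul_def, smul_eq_mul]
  -- now the limit
  rw [ENNReal.tendsto_nhds_zero]
  intro δ hδ
  set vB : ℝ≥0∞ := volume (closedBall (0 : EuclideanSpace ℝ (Fin n)) 1) with hvB
  have hvBtop : vB ≠ ∞ := measure_closedBall_lt_top.ne
  set Dg : ℝ≥0∞ := ((c' : ℝ≥0∞) + 1) * (vB + 1) * 2^n with hDg
  have hDg0 : Dg ≠ 0 := by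
    rw [hDg]
    exact mul_ne_zero (mul_ne_zero (by simp) (by simp)) (pow_ne_zero _ (by norm_num))
  have hDgtop : Dg ≠ ∞ := by
    rw [hDg]
    exact ENNReal.mul_ne_top (ENNReal.mul_ne_top (by simp) (by simp [hvBtop]))
      (by simp [ENNReal.pow_ne_top])
  set ε : ℝ≥0∞ := 1 ⊓ (δ * cK / Dg) with hε
  have hε0 : 0 < ε := lt_min one_pos (ENNReal.div_pos (mul_ne_zero hδ.ne' hcK0) hDgtop)
  have hε1 : ε ≤ 1 := min_le_left _ _
  have hkey2 : (c' : ℝ≥0∞) * ε * ENNReal.ofReal ((2:ℝ)^(n-1)) * vB ≤ δ * cK := by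
    have h9 : ENNReal.ofReal ((2:ℝ)^(n-1)) = (2:ℝ≥0∞)^(n-1) := by
      rw [ENNReal.ofReal_pow (by norm_num)]
      norm_num
    calc (c' : ℝ≥0∞) * ε * ENNReal.ofReal ((2:ℝ)^(n-1)) * vB
        ≤ ((c' : ℝ≥0∞) + 1) * ε * 2^n * (vB + 1) := by
          rw [h9]
          gcongr
          · exact le_self_add
          · exact one_le_two
          · omega
          · exact le_self_add
      _ = ε * Dg := by rw [hDg]; ring
      _ ≤ (δ * cK / Dg) * Dg := by gcongr; exact min_le_right _ _
      _ = δ * cK := ENNReal.div_mul_cancel hDg0 hDgtop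
  have h2r : Tendsto (fun r : ℝ => 2*r) (nhdsWithin 0 (Set.Ioi 0)) (nhdsWithin 0 (Set.Ioi 0)) := by
    apply tendsto_nhdsWithin_of_tendsto_nhds_of_eventually_within
    · have h10 : Tendsto (fun r : ℝ => 2*r) (nhds 0) (nhds (2*0)) :=
        (continuous_const.mul continuous_id).tendsto 0
      rw [mul_zero] at h10
      exact h10.mono_left nhdsWithin_le_nhds
    · filter_upwards [self_mem_nhdsWithin] with r hr
      exact mul_pos two_pos (Set.mem_Ioi.mp hr)
  have hde : ∀ᶠ r in nhdsWithin (0:ℝ) (Set.Ioi 0),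
      1 - ε ≤ volume (A ∩ closedBall x (2*r)) / volume (closedBall x (2*r)) := by
    have h1 : (1:ℝ≥0∞) - ε < 1 := ENNReal.sub_lt_self ENNReal.one_ne_top one_ne_zero hε0.ne'
    exact h2r.eventually (hx.eventually (eventually_ge_nhds h1))
  filter_upwards [hde, self_mem_nhdsWithin] with r hder hr
  have hrn : (0:ℝ) < r := hr
  -- the density estimate at radius 2r
  have hB0 : volume (closedBall x (2*r)) ≠ 0 :=
    (measure_closedBall_pos volume x (by linarith)).ne'
  have hBtop : volume (closedBall x (2*r)) ≠ ∞ := measure_closedBall_lt_top.ne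
  have hAB : (1 - ε) * volume (closedBall x (2*r)) ≤ volume (A ∩ closedBall x (2*r)) := by
    rw [← ENNReal.le_div_iff_mul_le (Or.inl hB0) (Or.inl hBtop)]
    exact hder
  have hsplit : volume (closedBall x (2*r) \ A) + volume (A ∩ closedBall x (2*r))
      = volume (closedBall x (2*r)) := by
    have hU : (closedBall x (2*r) \ A) ∪ (A ∩ closedBall x (2*r)) = closedBall x (2*r) := by
      ext z
      by_cases hz : z ∈ A <;> simp [hz]
    rw [← measure_union (Set.disjoint_left.mpr fun z hz1 hz2 => hz1.2 hz2.1)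
      (hA.inter measurableSet_closedBall), hU]
  have hdiff : volume (closedBall x (2*r) \ A) ≤ ε * volume (closedBall x (2*r)) := by
    have h3 : volume (closedBall x (2*r) \ A) + (1-ε) * volume (closedBall x (2*r))
        ≤ ε * volume (closedBall x (2*r)) + (1-ε) * volume (closedBall x (2*r)) := by
      calc volume (closedBall x (2*r) \ A) + (1-ε) * volume (closedBall x (2*r))
          ≤ volume (closedBall x (2*r) \ A) + volume (A ∩ closedBall x (2*r)) := by
            gcongr
        _ = volume (closedBall x (2*r)) := hsplit
        _ = 1 * volume (closedBall x (2*r)) := (one_mul _).symm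
        _ = (ε + (1-ε)) * volume (closedBall x (2*r)) := by
            rw [add_tsub_cancel_of_le hε1]
        _ = ε * volume (closedBall x (2*r)) + (1-ε) * volume (closedBall x (2*r)) := by
            rw [add_mul]
    exact (ENNReal.add_le_add_iff_right
      (ENNReal.mul_ne_top (by simp [ENNReal.sub_ne_top]) hBtop)).mp h3
  -- put everything together
  have h2r0 : ENNReal.ofReal (2*r) ≠ 0 := (ENNReal.ofReal_pos.mpr (by linarith)).ne'
  have h2rtop : ENNReal.ofReal (2*r) ≠ ∞ := ENNReal.ofReal_ne_top
  have hvolB : volume (closedBall x (2*r)) =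
      ENNReal.ofReal (2*r) * ((ENNReal.ofReal ((2:ℝ)^(n-1)) * ENNReal.ofReal (r^(n-1))) * vB) := by
    have h4 := Measure.addHaar_closedBall' volume x (by linarith : (0:ℝ) ≤ 2*r)
    rw [finrank_euclideanSpace_fin] at h4
    rw [h4, ← hvB]
    have h11 : (2*r)^n = (2*r) * ((2:ℝ)^(n-1) * r^(n-1)) := by
      conv_lhs => rw [show n = (n-1)+1 from by omega]
      rw [pow_succ, mul_pow]
      ring
    rw [h11, ENNReal.ofReal_mul (by positivity : (0:ℝ) ≤ 2*r),
      ENNReal.ofReal_mul (by positivity : (0:ℝ) ≤ (2:ℝ)^(n-1))]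
    ring
  have hEst : μK (S r) ≤ (δ * cK) * ENNReal.ofReal (r^(n-1)) := by
    have hA2 : μK (S r) * ENNReal.ofReal (2*r) ≤
        (((c' : ℝ≥0∞) * ε * ENNReal.ofReal ((2:ℝ)^(n-1)) * vB) * ENNReal.ofReal (r^(n-1)))
          * ENNReal.ofReal (2*r) := by
      calc μK (S r) * ENNReal.ofReal (2*r)
          ≤ (c' : ℝ≥0∞) * volume (closedBall x (2*r) \ A) := hkey1 r hrn
        _ ≤ (c' : ℝ≥0∞) * (ε * volume (closedBall x (2*r))) := by gcongr
        _ = (((c' : ℝ≥0∞) * ε * ENNReal.ofReal ((2:ℝ)^(n-1)) * vB) * ENNReal.ofReal (r^(n-1)))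
              * ENNReal.ofReal (2*r) := by rw [hvolB]; ring
    have hA3 := (ENNReal.mul_le_mul_iff_left h2r0 h2rtop).mp hA2
    calc μK (S r) ≤ ((c' : ℝ≥0∞) * ε * ENNReal.ofReal ((2:ℝ)^(n-1)) * vB)
          * ENNReal.ofReal (r^(n-1)) := hA3
      _ ≤ (δ * cK) * ENNReal.ofReal (r^(n-1)) := mul_le_mul_left hkey2 _
  -- final division
  have hden0 : ENNReal.ofReal (r^(n-1)) * cK ≠ 0 :=
    mul_ne_zero (ENNReal.ofReal_pos.mpr (by positivity)).ne' hcK0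
  have hdentop : ENNReal.ofReal (r^(n-1)) * cK ≠ ∞ :=
    ENNReal.mul_ne_top ENNReal.ofReal_ne_top hcKtop
  rw [hNum r, hDen r hrn.le, ENNReal.div_le_iff hden0 hdentop]
  calc μK (S r) ≤ (δ * cK) * ENNReal.ofReal (r^(n-1)) := hEst
    _ = δ * (ENNReal.ofReal (r^(n-1)) * cK) := by ring
end
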